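/- arXiv:1109.2112 — 2 statements merged into one kernel-verified Lean document; each statement's English description precedes it below -/
import Mathlib

section
/- Let G be a loopless multigraph, k ≥ γ'_l(G), and suppose c is a proper k-edge-colouring of G − e where e joins v₀ and v₁. If F = (e; c; v₀; v₁, v₂, ..., v_ℓ) is a maximal fan hinged at v₀ with ℓ ≥ 3 distinct fan vertices, then the sets of missing colours at v₀, v₁, ..., v_ℓ (counting the uncoloured edge e as missing at v₀ and v₁) cannot all be pairwise disjoint. -/
open scoped Classical

structure Multigraph (V : Type) (E : Type) where
  inc : E → Sym2 V
  loopless : ∀ e, ¬ (inc e).IsDiag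

namespace Multigraph

variable {V E : Type} [Fintype V] [Fintype E] (G : Multigraph V E)

/-- Degree of a vertex: number of edges incident to it. -/
noncomputable def deg (v : V) : ℕ :=
  (Finset.univ.filter fun e : E => v ∈ G.inc e).card

/-- Multiplicity: number of parallel edges between `u` and `v`. -/
noncomputable def mul (u v : V) : ℕ :=
  (Finset.univ.filter fun e : E => G.inc e = s(u, v)).card

/-- `t(uv)`: max over common neighbours `w` of `μ(uv)+μ(uw)+μ(vw)`
(equal to `μ(uv)` if there is no common neighbour). -/
noncomputable def tri (u v : V) : ℕ :=
  G.mul u v +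
    (Finset.univ.filter fun w : V => w ≠ u ∧ w ≠ v ∧ 0 < G.mul u w ∧ 0 < G.mul v w).sup
      (fun w => G.mul u w + G.mul v w)

/-- The local bound at an edge `uv` (ceilings computed via `(·+1)/2` in `ℕ`). -/
noncomputable def gval (u v : V) : ℕ :=
  max (G.deg u + (G.deg v - G.mul u v + 1) / 2)
    (max (G.deg v + (G.deg u - G.mul u v + 1) / 2)
      ((G.deg u + G.deg v - G.mul u v + G.tri u v + 1) / 2))

/-- `γ'_l(G)`: maximum of `gval` over all (ordered) adjacent pairs of vertices. -/
noncomputable def gammaL : ℕ :=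
  (Finset.univ.filter fun p : V × V => 0 < G.mul p.1 p.2).sup fun p => G.gval p.1 p.2

/-- A proper `k`-edge-colouring: distinct edges sharing an endpoint get distinct colours. -/
def Proper {k : ℕ} (c : E → Fin k) : Prop :=
  ∀ e f : E, e ≠ f → (∃ x, x ∈ G.inc e ∧ x ∈ G.inc f) → c e ≠ c f

/-- A proper `k`-edge-colouring of `G - e₀` (the value of `c` on `e₀` is ignored). -/
def ProperExcept {k : ℕ} (e₀ : E) (c : E → Fin k) : Prop :=
  ∀ e f : E, e ≠ f → e ≠ e₀ → f ≠ e₀ → (∃ x, x ∈ G.inc e ∧ x ∈ G.inc f) → c e ≠ c f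

/-- The line graph of a multigraph. -/
def lineGraph : SimpleGraph E where
  Adj e f := e ≠ f ∧ ∃ x, x ∈ G.inc e ∧ x ∈ G.inc f
  symm := by
    constructor
    rintro e f ⟨hef, x, hx1, hx2⟩
    exact ⟨hef.symm, x, hx2, hx1⟩
  loopless := by constructor; rintro e ⟨h, -⟩; exact h rfl

end Multigraph

/-- `ω(v)`: size of the largest clique containing `v`. -/
noncomputable def omegaAt {α : Type} [Fintype α] (H : SimpleGraph α) (v : α) : ℕ :=
  ((Finset.univ : Finset (Finset α)).filter fun s : Finset α => H.IsClique (↑s : Set α) ∧ v ∈ s).sup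
    Finset.card

/-- A colour `a` is missing at `w` in the partial colouring `c` of `G - e`
(the uncoloured edge `e` does not count). -/
def MissingAt {V E : Type} {k : ℕ} (G : Multigraph V E) (e : E) (c : E → Fin k)
    (w : V) (a : Fin k) : Prop :=
  ∀ f : E, f ≠ e → w ∈ G.inc f → c f ≠ a

/-- Let `k ≥ γ'_l(G)` and let `c` be a proper `k`-edge-colouring of
`G - e` with `e` joining `v₀` and `v₁`.  If `(e; c; v₀; v₁, …, v_ℓ)` is a maximal fan
hinged at `v₀` with `ℓ ≥ 3`, then the sets of missing colours at `v₀, v₁, …, v_ℓ`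
cannot all be pairwise disjoint. -/
theorem maximal_fan_missing_sets_not_disjoint {V E : Type} [Fintype V] [Fintype E]
    (G : Multigraph V E) (k : ℕ) (hk : G.gammaL ≤ k)
    (ℓ : ℕ) (hℓ : 3 ≤ ℓ) (vs : Fin (ℓ + 1) → V) (hinj : Function.Injective vs)
    (e : E) (he : G.inc e = s(vs 0, vs 1))
    (c : E → Fin k) (hc : G.ProperExcept e c)
    (hnbr : ∀ i : Fin (ℓ + 1), 1 ≤ (i : ℕ) → 0 < G.mul (vs 0) (vs i))
    (hfan : ∀ j : Fin (ℓ + 1), 2 ≤ (j : ℕ) →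
      ∃ i : Fin (ℓ + 1), 1 ≤ (i : ℕ) ∧ (i : ℕ) < (j : ℕ) ∧
        ∃ f : E, f ≠ e ∧ G.inc f = s(vs 0, vs j) ∧ MissingAt G e c (vs i) (c f))
    (hmax : ¬ ∃ u : V, (∀ i : Fin (ℓ + 1), u ≠ vs i) ∧
      ∃ f : E, f ≠ e ∧ G.inc f = s(vs 0, u) ∧
        ∃ i : Fin (ℓ + 1), 1 ≤ (i : ℕ) ∧ MissingAt G e c (vs i) (c f)) :
    ¬ (∀ i j : Fin (ℓ + 1), i ≠ j → ∀ a : Fin k,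
        MissingAt G e c (vs i) a → ¬ MissingAt G e c (vs j) a) := by
  classical
  intro H
  -- notation
  set Mset : Fin (ℓ + 1) → Finset (Fin k) :=
    fun i => Finset.univ.filter fun a => MissingAt G e c (vs i) a with hMset
  set I : Finset (Fin (ℓ + 1)) := Finset.univ.filter fun i => 1 ≤ (i : ℕ) with hIdef
  set N0 : Finset E := Finset.univ.filter fun f => vs 0 ∈ G.inc f with hN0def
  set D : Finset E := Finset.univ.filter fun f =>
    f ≠ e ∧ ∃ j : Fin (ℓ + 1), 1 ≤ (j : ℕ) ∧ G.inc f = s(vs 0, vs j) with hDdef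
  have hN0card : N0.card = G.deg (vs 0) := rfl
  have heN0 : e ∈ N0 := by simp [hN0def, he]
  have hd0pos : 1 ≤ G.deg (vs 0) := by
    rw [← hN0card]; exact Finset.card_pos.mpr ⟨e, heN0⟩
  -- (a) local bound
  have hka : ∀ i ∈ I, G.deg (vs i) + (G.deg (vs 0) - G.mul (vs 0) (vs i) + 1) / 2 ≤ k := by
    intro i hi
    have hi1 : 1 ≤ (i : ℕ) := (Finset.mem_filter.mp hi).2
    have hmul : 0 < G.mul (vs 0) (vs i) := hnbr i hi1
    have hmem : (vs 0, vs i) ∈ Finset.univ.filter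
        (fun p : V × V => 0 < G.mul p.1 p.2) := by simp [hmul]
    have h1 : G.gval (vs 0) (vs i) ≤ G.gammaL :=
      Finset.le_sup (f := fun p : V × V => G.gval p.1 p.2) hmem
    have h2 : G.deg (vs i) + (G.deg (vs 0) - G.mul (vs 0) (vs i) + 1) / 2
        ≤ G.gval (vs 0) (vs i) :=
      le_trans (le_max_left _ _) (le_max_right _ _)
    exact le_trans (le_trans h2 h1) hk
  -- (b) missing count lower bound
  have hkb : ∀ i : Fin (ℓ + 1), k ≤ (Mset i).card + G.deg (vs i) := by
    intro i
    have hsub : (Finset.univ : Finset (Fin k)) ⊆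
        Mset i ∪ (Finset.univ.filter fun f : E => f ≠ e ∧ vs i ∈ G.inc f).image c := by
      intro a _
      by_cases hma : MissingAt G e c (vs i) a
      · exact Finset.mem_union_left _ (by simp [hMset, hma])
      · simp only [MissingAt] at hma
        push_neg at hma
        obtain ⟨f, hfe, hfi, hcf⟩ := hma
        exact Finset.mem_union_right _ (Finset.mem_image.mpr ⟨f, by simp [hfe, hfi], hcf⟩)
    have h1 : k ≤ (Mset i).card +
        ((Finset.univ.filter fun f : E => f ≠ e ∧ vs i ∈ G.inc f).image c).card := by
      have h := (Finset.card_le_card hsub).trans (Finset.card_union_le _ _)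
      simpa using h
    have h2 : ((Finset.univ.filter fun f : E => f ≠ e ∧ vs i ∈ G.inc f).image c).card
        ≤ G.deg (vs i) := by
      refine le_trans Finset.card_image_le (Finset.card_le_card ?_)
      intro f hf
      simp only [Finset.mem_filter, Finset.mem_univ, true_and] at hf ⊢
      exact hf.2
    omega
  -- (c) union of missing sets injects into edges of the fan at v0
  have hUD : I.biUnion Mset ⊆ D.image c := by
    intro a ha
    obtain ⟨i, hiI, hai⟩ := Finset.mem_biUnion.mp ha
    have hi1 : 1 ≤ (i : ℕ) := (Finset.mem_filter.mp hiI).2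
    have hma : MissingAt G e c (vs i) a := (Finset.mem_filter.mp hai).2
    have hi0 : i ≠ 0 := by
      intro h
      rw [h] at hi1
      simp at hi1
    have hn0 : ¬ MissingAt G e c (vs 0) a := H i 0 hi0 a hma
    simp only [MissingAt] at hn0
    push_neg at hn0
    obtain ⟨f, hfe, hf0, hcf⟩ := hn0
    have hincf : s(vs 0, Sym2.Mem.other hf0) = G.inc f := Sym2.other_spec hf0
    set u := Sym2.Mem.other hf0 with hu
    have hune : u ≠ vs 0 := by
      intro h
      have hl := G.loopless f
      rw [← hincf, h] at hl
      exact hl (by simp)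
    by_cases hex : ∃ j : Fin (ℓ + 1), u = vs j
    · obtain ⟨j, hj⟩ := hex
      have hj0 : 1 ≤ (j : ℕ) := by
        rcases Nat.eq_zero_or_pos (j : ℕ) with h0 | h1
        · exfalso
          apply hune
          rw [hj]
          congr 1
          exact Fin.ext (by simpa using h0)
        · exact h1
      refine Finset.mem_image.mpr ⟨f, ?_, hcf⟩
      simp only [hDdef, Finset.mem_filter, Finset.mem_univ, true_and]
      exact ⟨hfe, j, hj0, by rw [← hincf, hj]⟩
    · push_neg at hex
      exact absurd ⟨u, hex, f, hfe, hincf.symm, i, hi1, by rw [hcf]; exact hma⟩ hmax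
  have hdisj : ∀ i ∈ I, ∀ j ∈ I, i ≠ j → Disjoint (Mset i) (Mset j) := by
    intro i _ j _ hij
    refine Finset.disjoint_left.mpr ?_
    intro a hai haj
    exact H i j hij a (Finset.mem_filter.mp hai).2 (Finset.mem_filter.mp haj).2
  have hsumM : ∑ i ∈ I, (Mset i).card ≤ D.card := by
    rw [← Finset.card_biUnion hdisj]
    exact le_trans (Finset.card_le_card hUD) Finset.card_image_le
  -- (d) D has fewer than deg v0 edges
  have hDcard : D.card + 1 ≤ G.deg (vs 0) := by
    have heD : e ∉ D := by simp [hDdef]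
    have hsub : insert e D ⊆ N0 := by
      intro f hf
      rcases Finset.mem_insert.mp hf with rfl | hf
      · exact heN0
      · obtain ⟨-, j, -, hj⟩ := (Finset.mem_filter.mp hf).2
        simp [hN0def, hj]
    calc D.card + 1 = (insert e D).card := (Finset.card_insert_of_notMem heD).symm
      _ ≤ N0.card := Finset.card_le_card hsub
      _ = G.deg (vs 0) := rfl
  -- (e) multiplicity sums
  have hTsub : ∀ i : Fin (ℓ + 1),
      (Finset.univ.filter fun f : E => G.inc f = s(vs 0, vs i)) ⊆ N0 := by
    intro i f hf
    have h := (Finset.mem_filter.mp hf).2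
    simp [hN0def, h]
  have hmule : ∀ i : Fin (ℓ + 1), G.mul (vs 0) (vs i) ≤ G.deg (vs 0) := fun i =>
    Finset.card_le_card (hTsub i)
  have hmusum : ∑ i ∈ I, G.mul (vs 0) (vs i) ≤ G.deg (vs 0) := by
    have hd : ∀ i ∈ I, ∀ j ∈ I, i ≠ j →
        Disjoint (Finset.univ.filter fun f : E => G.inc f = s(vs 0, vs i))
          (Finset.univ.filter fun f : E => G.inc f = s(vs 0, vs j)) := by
      intro i hiI j hjI hij
      refine Finset.disjoint_left.mpr ?_
      intro f hfi hfj
      have h1 : G.inc f = s(vs 0, vs i) := (Finset.mem_filter.mp hfi).2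
      have h2 : G.inc f = s(vs 0, vs j) := (Finset.mem_filter.mp hfj).2
      have h3 : s(vs 0, vs i) = s(vs 0, vs j) := h1 ▸ h2
      rw [Sym2.eq_iff] at h3
      rcases h3 with ⟨-, h4⟩ | ⟨h4, -⟩
      · exact hij (hinj h4)
      · have hj1 : 1 ≤ (j : ℕ) := (Finset.mem_filter.mp hjI).2
        have : (0 : Fin (ℓ + 1)) = j := hinj h4
        rw [← this] at hj1
        simp at hj1
    have heq : ∑ i ∈ I, G.mul (vs 0) (vs i)
        = (I.biUnion fun i => Finset.univ.filter fun f : E => G.inc f = s(vs 0, vs i)).card :=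
      (Finset.card_biUnion hd).symm
    rw [heq, ← hN0card]
    refine Finset.card_le_card ?_
    intro f hf
    obtain ⟨i, -, hfi⟩ := Finset.mem_biUnion.mp hf
    exact hTsub i hfi
  -- (f) arithmetic wrap-up
  have hper : ∀ i ∈ I, (G.deg (vs 0) - G.mul (vs 0) (vs i) + 1) / 2 ≤ (Mset i).card := by
    intro i hi
    have h1 := hka i hi
    have h2 := hkb i
    omega
  have hX : ∑ i ∈ I, (G.deg (vs 0) - G.mul (vs 0) (vs i) + 1) / 2
      ≤ ∑ i ∈ I, (Mset i).card := Finset.sum_le_sum hper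
  have h2X : ∑ i ∈ I, (G.deg (vs 0) - G.mul (vs 0) (vs i))
      ≤ 2 * ∑ i ∈ I, (G.deg (vs 0) - G.mul (vs 0) (vs i) + 1) / 2 := by
    rw [Finset.mul_sum]
    refine Finset.sum_le_sum ?_
    intro i _
    omega
  have hsplit : ∑ i ∈ I, (G.deg (vs 0) - G.mul (vs 0) (vs i))
      + ∑ i ∈ I, G.mul (vs 0) (vs i) = I.card * G.deg (vs 0) := by
    rw [← Finset.sum_add_distrib]
    have h : ∀ i ∈ I, G.deg (vs 0) - G.mul (vs 0) (vs i) + G.mul (vs 0) (vs i)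
        = G.deg (vs 0) := fun i _ => by have := hmule i; omega
    rw [Finset.sum_congr rfl h, Finset.sum_const, smul_eq_mul]
  have hIcard : I.card = ℓ := by
    have hIc : I = ({0} : Finset (Fin (ℓ + 1)))ᶜ := by
      ext i
      simp only [hIdef, Finset.mem_filter, Finset.mem_univ, true_and, Finset.mem_compl,
        Finset.mem_singleton, Fin.ext_iff, Fin.val_zero]
      omega
    rw [hIc, Finset.card_compl]
    simp
  rw [hIcard] at hsplit
  have h3d : 3 * G.deg (vs 0) ≤ ℓ * G.deg (vs 0) := Nat.mul_le_mul_right _ hℓ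
  obtain ⟨y, hy⟩ : ∃ y, ℓ * G.deg (vs 0) = y := ⟨_, rfl⟩
  rw [hy] at hsplit h3d
  omega
end

section
/- Suppose ℓ ≥ 3, k ≥ d(v_i) + (d(v₀) − μ(v₀v_i))/2 for all i ∈ {1,...,ℓ}, and ℓ·k + 2 − Σᵢ μ(v₀v_i) ≤ Σᵢ d(v_i), where μ(v₀v_i) ≤ d(v₀) for each i and Σᵢ μ(v₀v_i) ≤ d(v₀). Then a contradiction follows; i.e., no such nonnegative integers exist. -/
/-- The counting contradiction at the heart of the maximal-fan lemma:
if `ℓ ≥ 3`, `k ≥ d(v_i) + (d(v₀) − μ(v₀v_i))/2` for all `1 ≤ i ≤ ℓ` (stated multiplied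
by 2), each `μ(v₀v_i) ≥ 1`, `Σ μ(v₀v_i) ≤ d(v₀)`, and
`ℓ·k + 2 − Σ μ(v₀v_i) ≤ Σ d(v_i)`, then we get a contradiction. -/
theorem fan_counting_contradiction (ℓ k : ℕ) (d : Fin (ℓ + 1) → ℕ) (μ : Fin ℓ → ℕ)
    (hℓ : 3 ≤ ℓ) (hk : 1 ≤ k)
    (hμ1 : ∀ i : Fin ℓ, 1 ≤ μ i)
    (hμd : ∀ i : Fin ℓ, μ i ≤ d 0)
    (hμsum : ∑ i : Fin ℓ, μ i ≤ d 0)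
    (hki : ∀ i : Fin ℓ, 2 * d i.succ + d 0 ≤ 2 * k + μ i)
    (hsum : ℓ * k + 2 ≤ (∑ i : Fin ℓ, d i.succ) + ∑ i : Fin ℓ, μ i) :
    False := by
  have h1 : ∑ i : Fin ℓ, (2 * d i.succ + d 0) ≤ ∑ i : Fin ℓ, (2 * k + μ i) :=
    Finset.sum_le_sum fun i _ => hki i
  simp only [Finset.sum_add_distrib, ← Finset.mul_sum, Finset.sum_const,
    Finset.card_univ, Fintype.card_fin, smul_eq_mul] at h1
  nlinarith [hsum, hμsum, h1, Nat.mul_le_mul_right (d 0) hℓ]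
end
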